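/- If f is a non-erasing morphism that is strongly quasiperiodic on infinite words, then for every infinite word w and every letter α, the quasiperiod of f(w) is a factor of f(α)^3 of length less than 2|f(α)|. -/

import Mathlib

namespace QPm

variable {A : Type*}

/-- Image of a finite word under a morphism given by images of letters. -/
def applyF (f : A → List A) (w : List A) : List A := (w.map f).flatten

/-- A morphism is non-erasing if images of letters are nonempty. -/
def NonErasing (f : A → List A) : Prop := ∀ a, f a ≠ []

/-- `wpow u k` is the `k`-fold concatenation `u^k`. -/
def wpow (u : List A) (k : ℕ) : List A := (List.replicate k u).flatten

/-- Every position of `w` is covered by an occurrence of `q` in `w`. -/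
def Covers (q w : List A) : Prop :=
  ∀ i < w.length, ∃ j, j ≤ i ∧ i < j + q.length ∧ j + q.length ≤ w.length ∧
    (w.drop j).take q.length = q

/-- `w` is `q`-quasiperiodic. -/
def QP (q w : List A) : Prop := q ≠ [] ∧ w ≠ q ∧ Covers q w

def Quasiperiodic (w : List A) : Prop := ∃ q, QP q w

def Superprimitive (w : List A) : Prop := ¬ Quasiperiodic w

/-- `q` is THE quasiperiod (shortest quasiperiod) of `w`. -/
def IsQuasiperiod (q w : List A) : Prop :=
  QP q w ∧ ∀ q', QP q' w → q.length ≤ q'.length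

/-- Every position of the infinite word `x` is covered by an occurrence of `q`. -/
def InfCovers (q : List A) (x : ℕ → A) : Prop :=
  ∀ i : ℕ, ∃ j, j ≤ i ∧ i < j + q.length ∧
    ∀ t (ht : t < q.length), x (j + t) = q.get ⟨t, ht⟩

/-- The infinite word `x` is `q`-quasiperiodic. -/
def InfQP (q : List A) (x : ℕ → A) : Prop := q ≠ [] ∧ InfCovers q x

def InfQuasiperiodic (x : ℕ → A) : Prop := ∃ q, InfQP q x

/-- `q` is THE quasiperiod (shortest quasiperiod) of the infinite word `x`. -/
def IsInfQuasiperiod (q : List A) (x : ℕ → A) : Prop :=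
  InfQP q x ∧ ∀ q', InfQP q' x → q.length ≤ q'.length

/-- Image of an infinite word under a (non-erasing) morphism: the `n`-th letter
of `f(x)` is the `n`-th letter of the image of a sufficiently long prefix. -/
def mapInf (f : A → List A) (x : ℕ → A) (n : ℕ) : A :=
  (applyF f (List.ofFn (fun i : Fin (n + 1) => x i))).getD n (x 0)

/-- `f` maps every (nonempty) finite word to a quasiperiodic word. -/
def StronglyQPFin (f : A → List A) : Prop :=
  ∀ w : List A, w ≠ [] → Quasiperiodic (applyF f w)

/-- `f` maps every infinite word to a quasiperiodic infinite word. -/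
def StronglyQPInf (f : A → List A) : Prop :=
  ∀ x : ℕ → A, InfQuasiperiodic (mapInf f x)

/-- `f` maps some non-quasiperiodic finite word to a quasiperiodic word. -/
def WeaklyQPFin (f : A → List A) : Prop :=
  ∃ w : List A, ¬ Quasiperiodic w ∧ Quasiperiodic (applyF f w)

/-- `f` maps some non-quasiperiodic infinite word to a quasiperiodic word. -/
def WeaklyQPInf (f : A → List A) : Prop :=
  ∃ x : ℕ → A, ¬ InfQuasiperiodic x ∧ InfQuasiperiodic (mapInf f x)

/-- The ultimately periodic infinite word `u v^ω` (with default letter `d`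
used only when `v` is empty). -/
def ultPer (u v : List A) (d : A) : ℕ → A :=
  fun n => if h : n < u.length then u.get ⟨n, h⟩
           else v.getD ((n - u.length) % v.length) d

/-- A finite word is primitive if it is not a power `u^k` with `k ≥ 2`. -/
def Primitive (w : List A) : Prop :=
  ¬ ∃ (u : List A) (k : ℕ), 2 ≤ k ∧ w = wpow u k

/-- `k`-fold composition of the morphism `f`. -/
def iterF (f : A → List A) : ℕ → A → List A
  | 0, a => [a]
  | (k + 1), a => applyF f (iterF f k a)


section Aux

variable {A : Type*}

private def pref (x : ℕ → A) (k : ℕ) : List A := List.ofFn fun i : Fin k => x i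

private lemma applyF_append (f : A → List A) (u v : List A) :
    applyF f (u ++ v) = applyF f u ++ applyF f v := by
  simp [applyF]

private lemma length_applyF_ge (f : A → List A) (hf : NonErasing f) (u : List A) :
    u.length ≤ (applyF f u).length := by
  induction u with
  | nil => simp [applyF]
  | cons a u ih =>
    have h1 : 1 ≤ (f a).length := List.length_pos_iff.mpr (hf a)
    have h2 : applyF f (a :: u) = f a ++ applyF f u := by simp [applyF]
    rw [h2, List.length_append, List.length_cons]
    omega

private lemma pref_succ (x : ℕ → A) (k : ℕ) : pref x (k + 1) = pref x k ++ [x k] := by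
  unfold pref
  rw [List.ofFn_succ']
  simp [Fin.coe_castSucc, Fin.val_last, List.concat_eq_append]

private lemma pref_length (x : ℕ → A) (k : ℕ) : (pref x k).length = k := by
  simp [pref]

private lemma applyF_pref_len_mono (f : A → List A) (x : ℕ → A) {k₁ k₂ : ℕ} (h : k₁ ≤ k₂) :
    (applyF f (pref x k₁)).length ≤ (applyF f (pref x k₂)).length := by
  induction k₂, h using Nat.le_induction with
  | base => exact le_rfl
  | succ k hk ih =>
    rw [pref_succ, applyF_append, List.length_append]
    omega

private lemma getD_applyF_pref (f : A → List A) (x : ℕ → A) (d : A) {m k₁ k₂ : ℕ} (h : k₁ ≤ k₂)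
    (hm : m < (applyF f (pref x k₁)).length) :
    (applyF f (pref x k₂)).getD m d = (applyF f (pref x k₁)).getD m d := by
  induction k₂, h using Nat.le_induction with
  | base => rfl
  | succ k hk ih =>
    rw [pref_succ, applyF_append,
      List.getD_append _ _ _ _ (lt_of_lt_of_le hm (applyF_pref_len_mono f x hk))]
    exact ih

private lemma mapInf_eq_getD (f : A → List A) (hf : NonErasing f) (x : ℕ → A) (m k : ℕ)
    (hm : m < (applyF f (pref x k)).length) :
    mapInf f x m = (applyF f (pref x k)).getD m (x 0) := by
  have hdef : mapInf f x m = (applyF f (pref x (m + 1))).getD m (x 0) := rfl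
  rcases le_total k (m + 1) with hk | hk
  · rw [hdef, getD_applyF_pref f x (x 0) hk hm]
  · have hm1 : m < (applyF f (pref x (m + 1))).length := by
      have := length_applyF_ge f hf (pref x (m + 1))
      rw [pref_length] at this
      omega
    rw [hdef, getD_applyF_pref f x (x 0) hk hm1]

private lemma mapInf_congr (f : A → List A) {x y : ℕ → A} {m : ℕ}
    (h : ∀ i ≤ m, x i = y i) : mapInf f x m = mapInf f y m := by
  unfold mapInf
  rw [h 0 (Nat.zero_le m),
    congrArg List.ofFn (funext fun i : Fin (m + 1) => h i (Nat.lt_succ_iff.mp i.isLt))]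

private lemma wpow_succ (u : List A) (k : ℕ) : wpow u (k + 1) = u ++ wpow u k := by
  simp [wpow, List.replicate_succ]

private lemma wpow_length (u : List A) (k : ℕ) : (wpow u k).length = k * u.length := by
  induction k with
  | zero => simp [wpow]
  | succ k ih => rw [wpow_succ, List.length_append, ih]; ring

private lemma wpow_getD (u : List A) (d : A) :
    ∀ k i, i < k * u.length → (wpow u k).getD i d = u.getD (i % u.length) d := by
  intro k
  induction k with
  | zero => intro i hi; omega
  | succ k ih =>
    intro i hi
    rw [wpow_succ]
    rcases lt_or_ge i u.length with h | h
    · rw [List.getD_append _ _ _ _ h, Nat.mod_eq_of_lt h]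
    · rw [List.getD_append_right _ _ _ _ h, ih (i - u.length) (by
        have e1 : (k + 1) * u.length = k * u.length + u.length := by ring
        omega)]
      congr 1
      conv_rhs => rw [show i = (i - u.length) + u.length by omega]
      rw [Nat.add_mod_right]

private lemma pref_const_tail {x : ℕ → A} {a : A} {n₀ : ℕ} (hx : ∀ m ≥ n₀, x m = a) :
    ∀ s : ℕ, pref x (n₀ + s) = pref x n₀ ++ List.replicate s a := by
  intro s
  induction s with
  | zero => simp
  | succ s ih =>
    rw [show n₀ + (s + 1) = (n₀ + s) + 1 from rfl, pref_succ, ih,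
      hx (n₀ + s) (Nat.le_add_right _ _), List.replicate_succ', List.append_assoc]

private lemma applyF_replicate (f : A → List A) (a : A) (s : ℕ) :
    applyF f (List.replicate s a) = wpow (f a) s := by
  simp [applyF, wpow, List.map_replicate]

private lemma mapInf_tail (f : A → List A) (hf : NonErasing f) {x : ℕ → A} {a : A} {n₀ : ℕ}
    (hx : ∀ m ≥ n₀, x m = a) {m : ℕ} (hm : (applyF f (pref x n₀)).length ≤ m) :
    mapInf f x m = (f a).getD ((m - (applyF f (pref x n₀)).length) % (f a).length) (x 0) := by
  have hp : 0 < (f a).length := List.length_pos_iff.mpr (hf a)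
  set L := (applyF f (pref x n₀)).length with hL
  set p := (f a).length with hpdef
  set t := m - L with ht
  set s := t / p + 1 with hs
  have hts : t < s * p := by
    have h1 := Nat.div_add_mod t p
    have h2 := Nat.mod_lt t hp
    have e1 : s * p = t / p * p + p := by rw [hs]; ring
    have e2 : p * (t / p) = t / p * p := by ring
    omega
  have hsplit := pref_const_tail hx s
  have hlen : m < (applyF f (pref x (n₀ + s))).length := by
    rw [hsplit, applyF_append, List.length_append, applyF_replicate, wpow_length, ← hL, ← hpdef]
    omega
  rw [mapInf_eq_getD f hf x m _ hlen, hsplit, applyF_append,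
    List.getD_append_right _ _ _ _ (by rw [← hL]; omega), applyF_replicate, ← hL,
    wpow_getD (f a) (x 0) s (m - L) (by rw [← hpdef]; omega)]

private lemma exists_min_qp {x : ℕ → A} (hx : InfQuasiperiodic x) :
    ∃ q, InfQP q x ∧ ∀ q', InfQP q' x → q.length ≤ q'.length := by
  classical
  obtain ⟨q0, h0⟩ := hx
  have hex : ∃ m, ∃ q : List A, q.length = m ∧ InfQP q x := ⟨q0.length, q0, rfl, h0⟩
  obtain ⟨q, hql, hqq⟩ := Nat.find_spec hex
  exact ⟨q, hqq, fun q' h' => hql ▸ Nat.find_le ⟨q', rfl, h'⟩⟩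

private lemma core (f : A → List A) (hf : NonErasing f) {x : ℕ → A} {a : A} {n₀ : ℕ}
    (hx : ∀ m ≥ n₀, x m = a) (hqp : InfQuasiperiodic (mapInf f x)) :
    ∃ r, InfQP r (mapInf f x) ∧ r.length < 2 * (f a).length ∧ r <:+: wpow (f a) 3 := by
  classical
  obtain ⟨r, hr, hmin⟩ := exists_min_qp hqp
  have hp : 0 < (f a).length := List.length_pos_iff.mpr (hf a)
  set p := (f a).length with hpdef
  set L := (applyF f (pref x n₀)).length with hL
  obtain ⟨j, hj1, hj2, hjv⟩ := hr.2 (L + r.length)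
  have hjL : L ≤ j := by omega
  set s := (j - L) % p with hsdef
  have hs : s < p := Nat.mod_lt _ hp
  have key : ∀ t (ht : t < r.length), r.getD t (x 0) = (f a).getD ((s + t) % p) (x 0) := by
    intro t ht
    have h1 := hjv t ht
    have h2 : mapInf f x (j + t) =
        (f a).getD ((j + t - L) % p) (x 0) := mapInf_tail f hf hx (by omega)
    simp only [List.get_eq_getElem] at h1
    rw [List.getD_eq_getElem r (x 0) ht, ← h1, h2]
    congr 1
    rw [show j + t - L = (j - L) + t by omega, hsdef, Nat.mod_add_mod]
  -- length bound
  have hlt : r.length < 2 * p := by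
    by_contra hcon
    push_neg at hcon
    have hper : ∀ t, p + t < r.length → r.getD (p + t) (x 0) = r.getD t (x 0) := by
      intro t htp
      rw [key (p + t) htp, key t (by omega)]
      congr 1
      rw [show s + (p + t) = s + t + p by omega, Nat.add_mod_right]
    set r' := r.take (r.length - p) with hr'
    have hlen' : r'.length = r.length - p := by
      rw [hr', List.length_take]; omega
    have hne' : r' ≠ [] := by
      apply List.ne_nil_of_length_pos
      omega
    have hget' : ∀ t (ht : t < r'.length),
        r'.get ⟨t, ht⟩ = r.get ⟨t, by omega⟩ := by
      intro t ht
      simp only [List.get_eq_getElem, hr', List.getElem_take]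
    have hcov' : InfCovers r' (mapInf f x) := by
      intro i
      obtain ⟨j', h1, h2, hv⟩ := hr.2 i
      by_cases hc : i < j' + r'.length
      · refine ⟨j', h1, hc, fun t ht => ?_⟩
        rw [hget' t ht]
        exact hv t (by omega)
      · refine ⟨j' + p, by omega, by omega, fun t ht => ?_⟩
        have htr : p + t < r.length := by omega
        have hv2 := hv (p + t) htr
        rw [show j' + p + t = j' + (p + t) by omega, hv2, hget' t ht]
        have e1 : r.getD (p + t) (x 0) = r.getD t (x 0) := hper t (by omega)
        rw [List.getD_eq_getElem r (x 0) htr,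
          List.getD_eq_getElem r (x 0) (show t < r.length by omega)] at e1
        simp only [List.get_eq_getElem]
        exact e1
    have := hmin r' ⟨hne', hcov'⟩
    omega
  -- infix
  have hElen : (wpow (f a) 3).length = 3 * p := by rw [wpow_length]
  have hclaim : r = ((wpow (f a) 3).drop s).take r.length := by
    apply List.ext_get
    · rw [List.length_take, List.length_drop, hElen]
      omega
    · intro t h1 h2
      have hst : s + t < 3 * p := by omega
      simp only [List.get_eq_getElem, List.getElem_take, List.getElem_drop]
      have e1 : (wpow (f a) 3).getD (s + t) (x 0) = (f a).getD ((s + t) % p) (x 0) :=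
        wpow_getD (f a) (x 0) 3 (s + t) (by omega)
      rw [List.getD_eq_getElem _ (x 0) (by omega : s + t < (wpow (f a) 3).length)] at e1
      have e2 := key t h1
      rw [List.getD_eq_getElem r (x 0) h1] at e2
      rw [e2, ← e1]
  refine ⟨r, hr, hlt, ?_⟩
  rw [hclaim]
  exact (List.take_prefix _ _).isInfix.trans (List.drop_suffix _ _).isInfix

end Aux

theorem stmt10 {A : Type*} (f : A → List A) (hf : NonErasing f)
    (h : StronglyQPInf f) (w : ℕ → A) (α : A) (q : List A)
    (hq : IsInfQuasiperiod q (mapInf f w)) :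
    q <:+: wpow (f α) 3 ∧ q.length < 2 * (f α).length := by
  classical
  have hp : 0 < (f α).length := List.length_pos_iff.mpr (hf α)
  set E := wpow (f α) 3 with hE
  have key : ∀ n : ℕ, ∃ r, InfQP r (mapInf f (ultPer (pref w n) [α] α)) ∧
      r.length < 2 * (f α).length ∧ r <:+: E := by
    intro n
    have htail : ∀ m ≥ n, ultPer (pref w n) [α] α m = α := by
      intro m hm
      unfold ultPer
      rw [dif_neg (by rw [pref_length]; omega)]
      simp
    exact core f hf htail (h _)
  choose R h1 h2 h3 using key
  haveI : Finite {l : List A // l ∈ E.sublists} := by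
    have := (E.sublists).finite_toSet
    exact this.to_subtype
  let g : ℕ → {l : List A // l ∈ E.sublists} :=
    fun n => ⟨R n, List.mem_sublists.mpr (h3 n).sublist⟩
  obtain ⟨y, hy⟩ := Finite.exists_infinite_fiber g
  set r := y.1 with hrdef
  have hfib : ∀ N : ℕ, ∃ n, N ≤ n ∧ R n = r := by
    intro N
    have hinf : (g ⁻¹' {y} : Set ℕ).Infinite := Set.infinite_coe_iff.mp hy
    obtain ⟨n, hn, hN⟩ := hinf.exists_gt N
    refine ⟨n, le_of_lt hN, ?_⟩
    have : g n = y := hn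
    exact congrArg Subtype.val this
  obtain ⟨n₀, _, hn₀⟩ := hfib 0
  have hrE : r <:+: E := hn₀ ▸ h3 n₀
  have hrlen : r.length < 2 * (f α).length := hn₀ ▸ h2 n₀
  have hrne : r ≠ [] := hn₀ ▸ (h1 n₀).1
  have hcov : InfCovers r (mapInf f w) := by
    intro i
    obtain ⟨n, hnN, hnr⟩ := hfib (i + r.length + 1)
    have hc := (h1 n).2
    rw [hnr] at hc
    obtain ⟨j, hj1, hj2, hjv⟩ := hc i
    refine ⟨j, hj1, hj2, fun t ht => ?_⟩
    rw [← hjv t ht]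
    apply mapInf_congr
    intro i' hi'
    have hi'n : i' < n := by omega
    unfold ultPer
    rw [dif_pos (by rw [pref_length]; omega)]
    simp [pref]
  have hrQP : InfQP r (mapInf f w) := ⟨hrne, hcov⟩
  have hlen : q.length ≤ r.length := hq.2 r hrQP
  have hqpref : ∀ t (ht : t < q.length), mapInf f w t = q.get ⟨t, ht⟩ := by
    obtain ⟨j, hj1, hj2, hjv⟩ := hq.1.2 0
    have hj0 : j = 0 := Nat.le_zero.mp hj1
    subst hj0
    simpa using hjv
  have hrpref : ∀ t (ht : t < r.length), mapInf f w t = r.get ⟨t, ht⟩ := by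
    obtain ⟨j, hj1, hj2, hjv⟩ := hcov 0
    have hj0 : j = 0 := Nat.le_zero.mp hj1
    subst hj0
    simpa using hjv
  have hqr : q <+: r := by
    have hq_eq : q = r.take q.length := by
      apply List.ext_get
      · rw [List.length_take]; omega
      · intro t ht1 ht2
        have ht3 : t < r.length := by omega
        simp only [List.get_eq_getElem, List.getElem_take]
        have e1 := hqpref t ht1
        have e2 := hrpref t ht3
        simp only [List.get_eq_getElem] at e1 e2
        rw [← e1, ← e2]
    rw [hq_eq]
    exact List.take_prefix _ _
  exact ⟨hqr.isInfix.trans hrE, lt_of_le_of_lt hlen hrlen⟩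


end QPm
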